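/- (Weighted sum bound for the FW schedule.) Let β₀ > 0 and for integer i ≥ 1 set β_i = β₀√(i+1) and η_i = 2/(i+1). Then for every integer t ≥ 1, ∑_{i=1}^{t} β_i η_i² ∏_{j=i+1}^{t} (1 − η_j) ≤ 4β₀/√(t+1), where the empty product equals 1. -/

import Mathlib

open scoped BigOperators

lemma fw_prod_telescope (i : ℕ) (hi : 1 ≤ i) (t : ℕ) (hit : i ≤ t) :
    (∏ j ∈ Finset.Icc (i + 1) t, (1 - 2 / ((j : ℝ) + 1)))
      = ((i : ℝ) * ((i : ℝ) + 1)) / ((t : ℝ) * ((t : ℝ) + 1)) := by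
  induction t, hit using Nat.le_induction with
  | base =>
      rw [Finset.Icc_eq_empty (by omega), Finset.prod_empty]
      have hi' : (0:ℝ) < (i:ℝ) := by exact_mod_cast hi
      field_simp
  | succ n hn ih =>
      have hin : i + 1 ≤ n + 1 := by omega
      rw [Finset.prod_Icc_succ_top hin, ih]
      have h0 : (0:ℝ) < (n:ℝ) := by
        have : 1 ≤ n := le_trans hi hn
        exact_mod_cast this
      push_cast
      field_simp
      ring

theorem fw_schedule_weighted_sum_bound (β₀ : ℝ) (hβ₀ : 0 < β₀) (t : ℕ) (ht : 1 ≤ t) :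
    (∑ i ∈ Finset.Icc 1 t,
        (β₀ * Real.sqrt ((i : ℝ) + 1)) * (2 / ((i : ℝ) + 1)) ^ 2 *
          ∏ j ∈ Finset.Icc (i + 1) t, (1 - 2 / ((j : ℝ) + 1))) ≤
      4 * β₀ / Real.sqrt ((t : ℝ) + 1) := by
  have ht0 : (0:ℝ) < (t:ℝ) := by exact_mod_cast ht
  have ht1 : (0:ℝ) < (t:ℝ) + 1 := by linarith
  have hst : (0:ℝ) < Real.sqrt ((t:ℝ) + 1) := Real.sqrt_pos.mpr ht1
  -- per-term bound
  have key : ∀ i ∈ Finset.Icc 1 t,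
      (β₀ * Real.sqrt ((i : ℝ) + 1)) * (2 / ((i : ℝ) + 1)) ^ 2 *
          ∏ j ∈ Finset.Icc (i + 1) t, (1 - 2 / ((j : ℝ) + 1))
        ≤ 4 * β₀ * Real.sqrt ((t:ℝ) + 1) / ((t:ℝ) * ((t:ℝ) + 1)) := by
    intro i hi
    rw [Finset.mem_Icc] at hi
    rw [fw_prod_telescope i hi.1 t hi.2]
    have hi0 : (0:ℝ) < (i:ℝ) := by exact_mod_cast hi.1
    have hi1 : (0:ℝ) < (i:ℝ) + 1 := by linarith
    have hsi : Real.sqrt ((i:ℝ) + 1) ≤ Real.sqrt ((t:ℝ) + 1) := by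
      apply Real.sqrt_le_sqrt
      have : (i:ℝ) ≤ (t:ℝ) := by exact_mod_cast hi.2
      linarith
    have hsi0 : (0:ℝ) < Real.sqrt ((i:ℝ) + 1) := Real.sqrt_pos.mpr hi1
    have hexpand : (β₀ * Real.sqrt ((i : ℝ) + 1)) * (2 / ((i : ℝ) + 1)) ^ 2 *
        (((i : ℝ) * ((i : ℝ) + 1)) / ((t : ℝ) * ((t : ℝ) + 1)))
        = 4 * β₀ * Real.sqrt ((i:ℝ) + 1) * ((i:ℝ) / ((i:ℝ)+1)) / ((t:ℝ) * ((t:ℝ)+1)) := by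
      field_simp
      ring
    rw [hexpand]
    apply div_le_div_of_nonneg_right ?_ (by positivity)
    have hfrac : (i:ℝ) / ((i:ℝ)+1) ≤ 1 := by
      rw [div_le_one hi1]; linarith
    calc 4 * β₀ * Real.sqrt ((i:ℝ) + 1) * ((i:ℝ) / ((i:ℝ)+1))
        ≤ 4 * β₀ * Real.sqrt ((i:ℝ) + 1) * 1 := by
          apply mul_le_mul_of_nonneg_left hfrac (by positivity)
      _ = 4 * β₀ * Real.sqrt ((i:ℝ) + 1) := by ring
      _ ≤ 4 * β₀ * Real.sqrt ((t:ℝ) + 1) := by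
          apply mul_le_mul_of_nonneg_left hsi (by positivity)
  calc (∑ i ∈ Finset.Icc 1 t,
        (β₀ * Real.sqrt ((i : ℝ) + 1)) * (2 / ((i : ℝ) + 1)) ^ 2 *
          ∏ j ∈ Finset.Icc (i + 1) t, (1 - 2 / ((j : ℝ) + 1)))
      ≤ ∑ i ∈ Finset.Icc 1 t, 4 * β₀ * Real.sqrt ((t:ℝ) + 1) / ((t:ℝ) * ((t:ℝ) + 1)) :=
        Finset.sum_le_sum key
    _ = (t:ℝ) * (4 * β₀ * Real.sqrt ((t:ℝ) + 1) / ((t:ℝ) * ((t:ℝ) + 1))) := by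
        rw [Finset.sum_const, Nat.card_Icc]
        simp [nsmul_eq_mul]
    _ = 4 * β₀ / Real.sqrt ((t:ℝ) + 1) := by
        have hsq : Real.sqrt ((t:ℝ) + 1) * Real.sqrt ((t:ℝ) + 1) = (t:ℝ) + 1 :=
          Real.mul_self_sqrt (le_of_lt ht1)
        field_simp
        linear_combination hsq
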